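/- Let G be a snark with df(G) = 3, let C be a hexagonal core of an optimal 3-array M of G, and let T be a triangle of G with C ∩ T nonempty. Then C ∩ T consists of exactly one edge, and this edge is uncovered by M. -/

import Mathlib

open SimpleGraph

variable {V : Type} [Fintype V] [DecidableEq V]

/-- A cubic graph: every vertex has exactly three neighbours. -/
def IsCubic (G : SimpleGraph V) : Prop := ∀ v : V, (G.neighborSet v).ncard = 3

/-- A proper 3-edge-colouring: adjacent (distinct, vertex-sharing) edges get distinct colours. -/
def ProperEdgeColoring (G : SimpleGraph V) (c : Sym2 V → Fin 3) : Prop :=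
  ∀ e₁ ∈ G.edgeSet, ∀ e₂ ∈ G.edgeSet, e₁ ≠ e₂ → (∃ v : V, v ∈ e₁ ∧ v ∈ e₂) → c e₁ ≠ c e₂

def ThreeEdgeColorable (G : SimpleGraph V) : Prop :=
  ∃ c : Sym2 V → Fin 3, ProperEdgeColoring G c

/-- 2-connectedness: at least 3 vertices, connected, and deleting any vertex leaves it connected. -/
def TwoConnected (G : SimpleGraph V) : Prop :=
  3 ≤ Fintype.card V ∧ G.Connected ∧
    ∀ v : V, ((⊤ : G.Subgraph).deleteVerts {v}).coe.Connected

/-- A snark: a 2-connected cubic graph with no proper 3-edge-colouring. -/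
def IsSnark (G : SimpleGraph V) : Prop :=
  IsCubic G ∧ TwoConnected G ∧ ¬ ThreeEdgeColorable G

/-- The set of edges left uncovered by a 3-array of perfect matchings. -/
def uncovered (G : SimpleGraph V) (M : Fin 3 → G.Subgraph) : Set (Sym2 V) :=
  {e | e ∈ G.edgeSet ∧ ∀ i, e ∉ (M i).edgeSet}

/-- The colouring defect: minimum number of uncovered edges over all 3-arrays. -/
noncomputable def defect (G : SimpleGraph V) : ℕ :=
  sInf {n : ℕ | ∃ M : Fin 3 → G.Subgraph,
    (∀ i, (M i).IsPerfectMatching) ∧ n = (uncovered G M).ncard}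

/-- The number of matchings of the 3-array containing a given edge. -/
noncomputable def coverCount (G : SimpleGraph V) (M : Fin 3 → G.Subgraph)
    (e : Sym2 V) : ℕ :=
  {i : Fin 3 | e ∈ (M i).edgeSet}.ncard

/-- The edge set of the core: edges of `G` not simply covered. -/
def coreEdges (G : SimpleGraph V) (M : Fin 3 → G.Subgraph) : Set (Sym2 V) :=
  {e | e ∈ G.edgeSet ∧ coverCount G M e ≠ 1}

/-- The core of a 3-array, as a graph on `V`. -/
def coreGraph (G : SimpleGraph V) (M : Fin 3 → G.Subgraph) : SimpleGraph V where
  Adj u w := G.Adj u w ∧ coverCount G M s(u, w) ≠ 1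
  symm := by
    constructor
    intro u w h
    refine ⟨h.1.symm, ?_⟩
    rw [Sym2.eq_swap]
    exact h.2
  loopless := by
    constructor
    intro v h
    exact G.irrefl h.1

set_option linter.unusedSectionVars false

section Aux

variable {G : SimpleGraph V} {M : Fin 3 → G.Subgraph}

lemma fin3_cover : ∀ (i j k m : Fin 3), i ≠ j → i ≠ k → j ≠ k → (m = i ∨ m = j ∨ m = k) := by
  decide

lemma fin3_third : ∀ (i j : Fin 3), ∃ k, k ≠ i ∧ k ≠ j := by decide

lemma cc_eq_zero_iff (e : Sym2 V) :
    coverCount G M e = 0 ↔ ∀ i, e ∉ (M i).edgeSet := by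
  rw [coverCount, Set.ncard_eq_zero (Set.toFinite _), Set.eq_empty_iff_forall_notMem]
  simp

lemma mem_uncovered (e : Sym2 V) :
    e ∈ uncovered G M ↔ e ∈ G.edgeSet ∧ coverCount G M e = 0 := by
  rw [uncovered, Set.mem_setOf_eq, cc_eq_zero_iff]

lemma cc_pos {e : Sym2 V} {i : Fin 3} (hi : e ∈ (M i).edgeSet) : coverCount G M e ≠ 0 :=
  fun h => (cc_eq_zero_iff e).mp h i hi

lemma cc_one_spec {e : Sym2 V} (h : coverCount G M e = 1) :
    ∃ k, e ∈ (M k).edgeSet ∧ ∀ i, e ∈ (M i).edgeSet → i = k := by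
  obtain ⟨k, hk⟩ := Set.ncard_eq_one.mp h
  have hmem := Set.ext_iff.mp hk
  exact ⟨k, (hmem k).mpr rfl, fun i hi => (hmem i).mp hi⟩

lemma cc_two_all_ne {e : Sym2 V} (h : coverCount G M e = 2) {k : Fin 3}
    (hk : e ∉ (M k).edgeSet) : ∀ i, i ≠ k → e ∈ (M i).edgeSet := by
  obtain ⟨i, j, hij, hs⟩ := Set.ncard_eq_two.mp h
  have hmem := Set.ext_iff.mp hs
  have hik : i ≠ k := fun hh => hk (hh ▸ ((hmem i).mpr (Or.inl rfl)))
  have hjk : j ≠ k := fun hh => hk (hh ▸ ((hmem j).mpr (Or.inr rfl)))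
  intro m hm
  rcases fin3_cover i j k m hij hik hjk with rfl | rfl | rfl
  · exact (hmem m).mpr (Or.inl rfl)
  · exact (hmem m).mpr (Or.inr rfl)
  · exact absurd rfl hm

lemma cc_two_other {e : Sym2 V} (h : coverCount G M e = 2) {i : Fin 3}
    (hi : e ∈ (M i).edgeSet) : ∃ j, j ≠ i ∧ e ∈ (M j).edgeSet := by
  obtain ⟨x, y, hxy, hs⟩ := Set.ncard_eq_two.mp h
  have hmem := Set.ext_iff.mp hs
  rcases (hmem i).mp hi with rfl | rfl
  · exact ⟨y, hxy.symm, (hmem y).mpr (Or.inr rfl)⟩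
  · exact ⟨x, hxy, (hmem x).mpr (Or.inl rfl)⟩

lemma matched_unique {i : Fin 3} (hM : ∀ i, (M i).IsPerfectMatching) {v w1 w2 : V}
    (h1 : (M i).Adj v w1) (h2 : (M i).Adj v w2) : w1 = w2 := by
  obtain ⟨w, _, hu⟩ := (hM i).1 ((hM i).2 v)
  rw [hu w1 h1, hu w2 h2]

lemma matched_third {i : Fin 3} (hM : ∀ i, (M i).IsPerfectMatching) {v a b c' : V}
    (hnb : G.neighborSet v = {a, b, c'})
    (hna : s(v, a) ∉ (M i).edgeSet) (hnb' : s(v, b) ∉ (M i).edgeSet) :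
    (M i).Adj v c' := by
  obtain ⟨w, hw, _⟩ := (hM i).1 ((hM i).2 v)
  have hwm : w ∈ G.neighborSet v := (M i).adj_sub hw
  rw [hnb] at hwm
  rcases hwm with rfl | rfl | rfl
  · exact absurd (Subgraph.mem_edgeSet.mpr hw) hna
  · exact absurd (Subgraph.mem_edgeSet.mpr hw) hnb'
  · exact hw

lemma nbhd_one (hcub : IsCubic G) {v a : V} (h : G.Adj v a) :
    ∃ b c', a ≠ b ∧ a ≠ c' ∧ b ≠ c' ∧ G.neighborSet v = {a, b, c'} := by
  obtain ⟨x, y, z, hxy, hxz, hyz, hs⟩ := Set.ncard_eq_three.mp (hcub v)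
  have ha : a ∈ G.neighborSet v := h
  rw [hs] at ha
  rcases ha with rfl | rfl | rfl
  · exact ⟨y, z, hxy, hxz, hyz, hs⟩
  · refine ⟨x, z, hxy.symm, hyz, hxz, ?_⟩
    rw [hs]; ext t; simp; tauto
  · refine ⟨x, y, hxz.symm, hyz.symm, hxy, ?_⟩
    rw [hs]; ext t; simp; tauto

lemma nbhd_two (hcub : IsCubic G) {v a b : V} (ha : G.Adj v a) (hb : G.Adj v b)
    (hab : a ≠ b) :
    ∃ c', a ≠ c' ∧ b ≠ c' ∧ G.neighborSet v = {a, b, c'} := by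
  obtain ⟨x, y, hax, hay, hxy, hs⟩ := nbhd_one hcub ha
  have hbm : b ∈ G.neighborSet v := hb
  rw [hs] at hbm
  rcases hbm with rfl | rfl | rfl
  · exact absurd rfl hab
  · exact ⟨y, hay, hxy, hs⟩
  · refine ⟨x, hax, hxy.symm, ?_⟩
    rw [hs]; ext t; simp; tauto

lemma adj_of_nbhd3 {v a b c' : V} (hnb : G.neighborSet v = {a, b, c'}) : G.Adj v c' := by
  have : c' ∈ G.neighborSet v := by rw [hnb]; simp
  exact this

lemma cc_sum (hM : ∀ i, (M i).IsPerfectMatching) {v a b c' : V}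
    (hab : a ≠ b) (hac : a ≠ c') (hbc : b ≠ c')
    (hnb : G.neighborSet v = {a, b, c'}) :
    coverCount G M s(v, a) + coverCount G M s(v, b) + coverCount G M s(v, c') = 3 := by
  classical
  have hcc : ∀ e : Sym2 V,
      coverCount G M e = ∑ i : Fin 3, if e ∈ (M i).edgeSet then 1 else 0 := by
    intro e
    rw [coverCount, Set.ncard_eq_toFinset_card', Set.toFinset_setOf, Finset.card_filter]
  have key : ∀ i : Fin 3,
      ((if s(v, a) ∈ (M i).edgeSet then 1 else 0) +
       (if s(v, b) ∈ (M i).edgeSet then 1 else 0)) +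
       (if s(v, c') ∈ (M i).edgeSet then 1 else 0) = 1 := by
    intro i
    obtain ⟨w, hw, hu⟩ := (hM i).1 ((hM i).2 v)
    have hwm : w ∈ G.neighborSet v := (M i).adj_sub hw
    rw [hnb] at hwm
    rcases hwm with rfl | rfl | rfl
    · have h2 : ¬ (M i).Adj v b := fun h => hab (hu b h).symm
      have h3 : ¬ (M i).Adj v c' := fun h => hac (hu c' h).symm
      simp [Subgraph.mem_edgeSet, hw, h2, h3]
    · have h1 : ¬ (M i).Adj v a := fun h => hab (hu a h)
      have h3 : ¬ (M i).Adj v c' := fun h => hbc (hu c' h).symm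
      simp [Subgraph.mem_edgeSet, hw, h1, h3]
    · have h1 : ¬ (M i).Adj v a := fun h => hac (hu a h)
      have h2 : ¬ (M i).Adj v b := fun h => hbc (hu b h)
      simp [Subgraph.mem_edgeSet, hw, h1, h2]
  rw [hcc, hcc, hcc, ← Finset.sum_add_distrib, ← Finset.sum_add_distrib]
  simp only [key]
  simp

end Aux

set_option linter.unusedSectionVars false

section Mid

variable {G : SimpleGraph V} {M : Fin 3 → G.Subgraph}

lemma sym2_ne2 {p' q' r' s' : V} (h1 : p' ≠ r') (h2 : q' ≠ r') : s(p', q') ≠ s(r', s') := by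
  intro h
  rcases Sym2.eq_iff.mp h with ⟨h', _⟩ | ⟨_, h'⟩
  · exact h1 h'
  · exact h2 h'

lemma no_cc_three (hcub : IsCubic G) (hM : ∀ i, (M i).IsPerfectMatching)
    (hopt : (uncovered G M).ncard = 3) {d1 d2 : V} (hadj : G.Adj d1 d2)
    (h3 : coverCount G M s(d1, d2) = 3) : False := by
  have hall : ∀ i, (M i).Adj d1 d2 := by
    obtain ⟨i, j, k, hij, hik, hjk, hs⟩ := Set.ncard_eq_three.mp h3
    have hmem := Set.ext_iff.mp hs
    intro m
    have hm : m ∈ ({i, j, k} : Set (Fin 3)) := by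
      rcases fin3_cover i j k m hij hik hjk with rfl | rfl | rfl <;> simp
    exact SimpleGraph.Subgraph.mem_edgeSet.mp ((hmem m).mpr hm)
  obtain ⟨m1, n1, hm1, hn1, hmn1, hnb1⟩ := nbhd_one hcub hadj
  obtain ⟨m2, n2, hm2, hn2, hmn2, hnb2⟩ := nbhd_one hcub hadj.symm
  have key1 : ∀ x : V, G.Adj d1 x → x ≠ d2 → s(d1, x) ∈ uncovered G M := by
    intro x hx hxd
    refine (mem_uncovered _).mpr ⟨(G.mem_edgeSet).mpr hx, ?_⟩
    rw [cc_eq_zero_iff]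
    intro i hi
    exact hxd (matched_unique hM (SimpleGraph.Subgraph.mem_edgeSet.mp hi) (hall i))
  have key2 : ∀ x : V, G.Adj d2 x → x ≠ d1 → s(d2, x) ∈ uncovered G M := by
    intro x hx hxd
    refine (mem_uncovered _).mpr ⟨(G.mem_edgeSet).mpr hx, ?_⟩
    rw [cc_eq_zero_iff]
    intro i hi
    exact hxd (matched_unique hM (SimpleGraph.Subgraph.mem_edgeSet.mp hi) (hall i).symm)
  have am1 : G.Adj d1 m1 := by
    have : m1 ∈ G.neighborSet d1 := by rw [hnb1]; simp
    exact this
  have an1 : G.Adj d1 n1 := by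
    have : n1 ∈ G.neighborSet d1 := by rw [hnb1]; simp
    exact this
  have am2 : G.Adj d2 m2 := by
    have : m2 ∈ G.neighborSet d2 := by rw [hnb2]; simp
    exact this
  have an2 : G.Adj d2 n2 := by
    have : n2 ∈ G.neighborSet d2 := by rw [hnb2]; simp
    exact this
  have hsub : ({s(d1, m1), s(d1, n1), s(d2, m2), s(d2, n2)} : Set (Sym2 V)) ⊆ uncovered G M := by
    intro t ht
    rcases ht with rfl | rfl | rfl | rfl
    · exact key1 m1 am1 hm1.symm
    · exact key1 n1 an1 hn1.symm
    · exact key2 m2 am2 hm2.symm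
    · exact key2 n2 an2 hn2.symm
  have hd12 : d1 ≠ d2 := hadj.ne
  have hd1n1 : d1 ≠ n1 := an1.ne
  have hd1m1 : d1 ≠ m1 := am1.ne
  have hd2n2 : d2 ≠ n2 := an2.ne
  have d_e3 : s(d2, m2) ≠ s(d2, n2) := by
    intro h
    rcases Sym2.eq_iff.mp h with ⟨-, h'⟩ | ⟨h', -⟩
    · exact hmn2 h'
    · exact hd2n2 h'
  have d_e2 : s(d1, n1) ∉ ({s(d2, m2), s(d2, n2)} : Set (Sym2 V)) := by
    intro h
    rcases h with h | h
    · exact sym2_ne2 hd12 (Ne.symm hn1) h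
    · exact sym2_ne2 hd12 (Ne.symm hn1) h
  have d_e1 : s(d1, m1) ∉ ({s(d1, n1), s(d2, m2), s(d2, n2)} : Set (Sym2 V)) := by
    intro h
    rcases h with h | h | h
    · rcases Sym2.eq_iff.mp h with ⟨-, h'⟩ | ⟨h', -⟩
      · exact hmn1 h'
      · exact hd1n1 h'
    · exact sym2_ne2 hd12 (Ne.symm hm1) h
    · exact sym2_ne2 hd12 (Ne.symm hm1) h
  have h4 : ({s(d1, m1), s(d1, n1), s(d2, m2), s(d2, n2)} : Set (Sym2 V)).ncard = 4 := by
    rw [Set.ncard_insert_of_notMem d_e1, Set.ncard_insert_of_notMem d_e2,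
      Set.ncard_pair d_e3]
  have hle := Set.ncard_le_ncard hsub (Set.toFinite _)
  rw [hopt, h4] at hle
  omega

lemma case00 (hcub : IsCubic G) (hM : ∀ i, (M i).IsPerfectMatching)
    (hopt : (uncovered G M).ncard = 3) {p q r : V} (hqr : q ≠ r)
    (apq : G.Adj p q) (apr : G.Adj p r)
    (h0q : coverCount G M s(p, q) = 0) (h0r : coverCount G M s(p, r) = 0) : False := by
  obtain ⟨w, hqw, hrw, hnb⟩ := nbhd_two hcub apq apr hqr
  have hsum := cc_sum hM hqr hqw hrw hnb
  have h3 : coverCount G M s(p, w) = 3 := by omega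
  exact no_cc_three hcub hM hopt (adj_of_nbhd3 hnb) h3

lemma case211 (hcub : IsCubic G) (hM : ∀ i, (M i).IsPerfectMatching)
    {p q r : V} (hpq : p ≠ q) (hpr : p ≠ r) (hqr : q ≠ r)
    (apq : G.Adj p q) (apr : G.Adj p r) (aqr : G.Adj q r)
    (h2 : coverCount G M s(p, q) = 2) (h1pr : coverCount G M s(p, r) = 1)
    (h1qr : coverCount G M s(q, r) = 1) : False := by
  obtain ⟨wp, hq_wp, hr_wp, hnbp⟩ := nbhd_two hcub apq apr hqr
  obtain ⟨wq, hp_wq, hr_wq, hnbq⟩ := nbhd_two hcub apq.symm aqr hpr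
  have sump := cc_sum hM hqr hq_wp hr_wp hnbp
  have hwp0 : coverCount G M s(p, wp) = 0 := by omega
  have sumq := cc_sum hM hpr hp_wq hr_wq hnbq
  rw [show s(q, p) = s(p, q) from Sym2.eq_swap] at sumq
  have hwq0 : coverCount G M s(q, wq) = 0 := by omega
  obtain ⟨i, j, hij, hs⟩ := Set.ncard_eq_two.mp h2
  obtain ⟨k, hki, hkj⟩ := fin3_third i j
  have hpqk : s(p, q) ∉ (M k).edgeSet := by
    intro h
    rcases (Set.ext_iff.mp hs k).mp h with rfl | rfl
    · exact hki rfl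
    · exact hkj rfl
  have hnbp' : G.neighborSet p = {q, wp, r} := by rw [hnbp]; ext t; simp; tauto
  have hnbq' : G.neighborSet q = {p, wq, r} := by rw [hnbq]; ext t; simp; tauto
  have hpr_k : (M k).Adj p r :=
    matched_third hM hnbp' hpqk ((cc_eq_zero_iff _).mp hwp0 k)
  have hqr_k : (M k).Adj q r := by
    refine matched_third hM hnbq' ?_ ((cc_eq_zero_iff _).mp hwq0 k)
    rw [show s(q, p) = s(p, q) from Sym2.eq_swap]
    exact hpqk
  exact hpq (matched_unique hM hpr_k.symm hqr_k.symm)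

lemma swap_pm (G : SimpleGraph V) (N : G.Subgraph) (hN : N.IsPerfectMatching)
    (T : Set V) (P : Set (Sym2 V))
    (hPG : ∀ e ∈ P, e ∈ G.edgeSet)
    (hPT : ∀ a b : V, s(a, b) ∈ P → a ∈ T)
    (hmatch : ∀ v ∈ T, ∃! w, s(v, w) ∈ P)
    (hNT : ∀ v ∈ T, ∀ w, N.Adj v w → w ∈ T) :
    ∃ N' : G.Subgraph, N'.IsPerfectMatching ∧
      (∀ a b : V, s(a, b) ∈ P → N'.Adj a b) ∧
      (∀ a b : V, N'.Adj a b → s(a, b) ∈ P ∨ N.Adj a b) ∧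
      (∀ a b : V, N.Adj a b → a ∉ T → N'.Adj a b) := by
  classical
  refine ⟨{ verts := Set.univ,
            Adj := fun x y => s(x, y) ∈ P ∨ (N.Adj x y ∧ x ∉ T ∧ y ∉ T),
            adj_sub := ?_, edge_vert := fun _ => Set.mem_univ _,
            symm := ?_ }, ⟨?_, fun v => Set.mem_univ v⟩, ?_, ?_, ?_⟩
  · rintro x y (h | ⟨h, _, _⟩)
    · exact (G.mem_edgeSet).mp (hPG _ h)
    · exact N.adj_sub h
  · constructor
    rintro x y (h | ⟨h, hx, hy⟩)
    · left; rwa [Sym2.eq_swap]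
    · exact Or.inr ⟨h.symm, hy, hx⟩
  · intro v _
    by_cases hvT : v ∈ T
    · obtain ⟨w, hw, hu⟩ := hmatch v hvT
      refine ⟨w, Or.inl hw, ?_⟩
      rintro y (hy | ⟨_, hyv, _⟩)
      · exact hu y hy
      · exact absurd hvT hyv
    · obtain ⟨w, hw, hu⟩ := hN.1 (hN.2 v)
      have hwT : w ∉ T := fun h => hvT (hNT w h v hw.symm)
      refine ⟨w, Or.inr ⟨hw, hvT, hwT⟩, ?_⟩
      rintro y (hy | ⟨hy, _, _⟩)
      · exact absurd (hPT v y hy) hvT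
      · exact hu y hy
  · exact fun a b h => Or.inl h
  · rintro a b (h | ⟨h, _, _⟩)
    · exact Or.inl h
    · exact Or.inr h
  · intro a b h ha
    exact Or.inr ⟨h, ha, fun hb => ha (hNT b hb a h.symm)⟩

end Mid

section Hard

variable {G : SimpleGraph V} {M : Fin 3 → G.Subgraph}

lemma case021 (hcub : IsCubic G) (hM : ∀ i, (M i).IsPerfectMatching)
    (hopt : (uncovered G M).ncard = 3) (hdf : defect G = 3)
    {p q r : V} (hpq : p ≠ q) (hpr : p ≠ r) (hqr : q ≠ r)
    (apq : G.Adj p q) (apr : G.Adj p r) (aqr : G.Adj q r)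
    (h0 : coverCount G M s(p, q) = 0) (h2 : coverCount G M s(q, r) = 2)
    (h1 : coverCount G M s(p, r) = 1) : False := by
  classical
  obtain ⟨w, hq_w, hr_w, hnbp⟩ := nbhd_two hcub apq apr hqr
  obtain ⟨wq, hp_wq, hr_wq, hnbq⟩ := nbhd_two hcub apq.symm aqr hpr
  obtain ⟨u, hp_u, hq_u, hnbr⟩ := nbhd_two hcub apr.symm aqr.symm hpq
  have apw : G.Adj p w := adj_of_nbhd3 hnbp
  have aru : G.Adj r u := adj_of_nbhd3 hnbr
  have hpw_ne : p ≠ w := apw.ne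
  have hru_ne : r ≠ u := aru.ne
  have sump := cc_sum hM hqr hq_w hr_w hnbp
  have hpw2 : coverCount G M s(p, w) = 2 := by omega
  have sumq := cc_sum hM hpr hp_wq hr_wq hnbq
  rw [show s(q, p) = s(p, q) from Sym2.eq_swap] at sumq
  have hqwq1 : coverCount G M s(q, wq) = 1 := by omega
  have sumr := cc_sum hM hpq hp_u hq_u hnbr
  rw [show s(r, p) = s(p, r) from Sym2.eq_swap,
      show s(r, q) = s(q, r) from Sym2.eq_swap] at sumr
  have hru0 : coverCount G M s(r, u) = 0 := by omega
  -- the unique matching containing pr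
  obtain ⟨k, hk_mem, hk_uniq⟩ := cc_one_spec h1
  have hpr_k : (M k).Adj p r := SimpleGraph.Subgraph.mem_edgeSet.mp hk_mem
  have hqr_nk : s(q, r) ∉ (M k).edgeSet := by
    intro h
    exact hpq (matched_unique hM hpr_k.symm (SimpleGraph.Subgraph.mem_edgeSet.mp h).symm)
  have hqr_all : ∀ i, i ≠ k → (M i).Adj q r := fun i hi =>
    SimpleGraph.Subgraph.mem_edgeSet.mp (cc_two_all_ne h2 hqr_nk i hi)
  have hpw_all : ∀ i, i ≠ k → (M i).Adj p w := by
    intro i hi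
    exact matched_third hM hnbp ((cc_eq_zero_iff _).mp h0 i)
      (fun h => hi (hk_uniq i h))
  have hpq_unc : s(p, q) ∈ uncovered G M :=
    (mem_uncovered _).mpr ⟨(G.mem_edgeSet).mpr apq, h0⟩
  have hru_unc : s(r, u) ∈ uncovered G M :=
    (mem_uncovered _).mpr ⟨(G.mem_edgeSet).mpr aru, hru0⟩
  by_cases hwu : w = u
  · -- 4-cycle case : swap in M i along p-q-r-w
    subst hwu
    obtain ⟨i, hik, -⟩ := fin3_third k k
    obtain ⟨N', hN', hPadj, hPsub, hkeep⟩ := swap_pm G (M i) (hM i)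
      ({p, q, r, w} : Set V) ({s(p, q), s(r, w)} : Set (Sym2 V))
      (by rintro e (rfl | rfl)
          · exact (G.mem_edgeSet).mpr apq
          · exact (G.mem_edgeSet).mpr aru)
      (by intro a' b' h
          rcases h with h | h <;>
            rcases Sym2.eq_iff.mp h with ⟨rfl, rfl⟩ | ⟨rfl, rfl⟩ <;> simp)
      (by intro v hv
          rcases hv with rfl | rfl | rfl | rfl
          · refine ⟨q, by simp, ?_⟩
            intro y hy
            simp only [Set.mem_insert_iff, Set.mem_singleton_iff, Sym2.eq_iff] at hy
            rcases hy with (⟨-, h⟩ | ⟨h, -⟩) | (⟨h, -⟩ | ⟨h, -⟩)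
            · exact h
            · exact absurd h hpq
            · exact absurd h hpr
            · exact absurd h hpw_ne
          · refine ⟨p, by simp [Sym2.eq_swap], ?_⟩
            intro y hy
            simp only [Set.mem_insert_iff, Set.mem_singleton_iff, Sym2.eq_iff] at hy
            rcases hy with (⟨h, -⟩ | ⟨-, h⟩) | (⟨h, -⟩ | ⟨h, -⟩)
            · exact absurd h.symm hpq
            · exact h
            · exact absurd h hqr
            · exact absurd h hq_w
          · refine ⟨w, by simp, ?_⟩
            intro y hy
            simp only [Set.mem_insert_iff, Set.mem_singleton_iff, Sym2.eq_iff] at hy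
            rcases hy with (⟨h, -⟩ | ⟨h, -⟩) | (⟨-, h⟩ | ⟨h, -⟩)
            · exact absurd h.symm hpr
            · exact absurd h.symm hqr
            · exact h
            · exact absurd h hr_w
          · refine ⟨r, by simp [Sym2.eq_swap], ?_⟩
            intro y hy
            simp only [Set.mem_insert_iff, Set.mem_singleton_iff, Sym2.eq_iff] at hy
            rcases hy with (⟨h, -⟩ | ⟨h, -⟩) | (⟨h, -⟩ | ⟨-, h⟩)
            · exact absurd h.symm hpw_ne
            · exact absurd h.symm hq_w
            · exact absurd h.symm hr_w
            · exact h)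
      (by intro v hv y hy
          rcases hv with rfl | rfl | rfl | rfl
          · have : y = w := matched_unique hM hy (hpw_all i hik)
            subst this; simp
          · have : y = r := matched_unique hM hy (hqr_all i hik)
            subst this; simp
          · have : y = q := matched_unique hM hy (hqr_all i hik).symm
            subst this; simp
          · have : y = p := matched_unique hM hy (hpw_all i hik).symm
            subst this; simp)
    set M' : Fin 3 → G.Subgraph := Function.update M i N' with hM'def
    have hM' : ∀ j, (M' j).IsPerfectMatching := by
      intro j
      by_cases hji : j = i
      · subst hji; simp only [hM'def, Function.update_self]; exact hN'
      · simp only [hM'def, Function.update_of_ne hji]; exact hM j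
    have hdle : defect G ≤ (uncovered G M').ncard := Nat.sInf_le ⟨M', hM', rfl⟩
    have hsubun : uncovered G M' ⊆ uncovered G M \ {s(p, q), s(r, w)} := by
      intro e he
      revert he
      induction e using Sym2.ind with
      | _ x y =>
        intro he
        obtain ⟨heG, hecov⟩ := he
        have hei : s(x, y) ∉ N'.edgeSet := by
          have := hecov i; rwa [hM'def, Function.update_self] at this
        have hej : ∀ j, j ≠ i → s(x, y) ∉ (M j).edgeSet := by
          intro j hj
          have := hecov j; rwa [hM'def, Function.update_of_ne hj] at this
        have hnotMi : s(x, y) ∉ (M i).edgeSet := by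
          intro hmem
          have hAdj : (M i).Adj x y := SimpleGraph.Subgraph.mem_edgeSet.mp hmem
          have hxT : x ∈ ({p, q, r, w} : Set V) := by
            by_contra hxT
            exact hei (SimpleGraph.Subgraph.mem_edgeSet.mpr (hkeep x y hAdj hxT))
          obtain ⟨j, hji, hjk⟩ := fin3_third i k
          rcases hxT with rfl | rfl | rfl | rfl
          · have : y = w := matched_unique hM hAdj (hpw_all i hik)
            subst this
            exact hej j hji (SimpleGraph.Subgraph.mem_edgeSet.mpr (hpw_all j hjk))
          · have : y = r := matched_unique hM hAdj (hqr_all i hik)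
            subst this
            exact hej j hji (SimpleGraph.Subgraph.mem_edgeSet.mpr (hqr_all j hjk))
          · have : y = q := matched_unique hM hAdj (hqr_all i hik).symm
            subst this
            exact hej j hji (SimpleGraph.Subgraph.mem_edgeSet.mpr (hqr_all j hjk).symm)
          · have : y = p := matched_unique hM hAdj (hpw_all i hik).symm
            subst this
            exact hej j hji (SimpleGraph.Subgraph.mem_edgeSet.mpr (hpw_all j hjk).symm)
        refine ⟨⟨heG, fun j => ?_⟩, ?_⟩
        · by_cases hji : j = i
          · subst hji; exact hnotMi
          · exact hej j hji
        · intro hmem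
          rcases hmem with h | h
          · rw [h] at hei
            exact hei (SimpleGraph.Subgraph.mem_edgeSet.mpr (hPadj p q (by simp)))
          · rw [Set.mem_singleton_iff] at h
            rw [h] at hei
            exact hei (SimpleGraph.Subgraph.mem_edgeSet.mpr (hPadj r w (by simp)))
    have hne12 : s(p, q) ≠ s(r, w) := sym2_ne2 hpr hqr
    have hsub2 : ({s(p, q), s(r, w)} : Set (Sym2 V)) ⊆ uncovered G M := by
      rintro t (rfl | rfl)
      · exact hpq_unc
      · exact hru_unc
    have hdiff : (uncovered G M \ {s(p, q), s(r, w)}).ncard = 1 := by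
      rw [Set.ncard_diff hsub2 (Set.toFinite _), hopt, Set.ncard_pair hne12]
    have hle2 := Set.ncard_le_ncard hsubun (Set.toFinite _)
    rw [hdiff] at hle2
    rw [hdf] at hdle
    omega
  · -- 6-cycle case
    -- u's neighbours
    obtain ⟨s1, t1, hr_s1, hr_t1, hst1, hnbu⟩ := nbhd_one hcub aru.symm
    have as1 : G.Adj u s1 := by
      have : s1 ∈ G.neighborSet u := by rw [hnbu]; simp
      exact this
    have at1 : G.Adj u t1 := by
      have : t1 ∈ G.neighborSet u := by rw [hnbu]; simp
      exact this
    have sumu := cc_sum hM hr_s1 hr_t1 hst1 hnbu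
    rw [show s(u, r) = s(r, u) from Sym2.eq_swap] at sumu
    have h3s1 : coverCount G M s(u, s1) ≠ 3 := fun h => no_cc_three hcub hM hopt as1 h
    have h3t1 : coverCount G M s(u, t1) ≠ 3 := fun h => no_cc_three hcub hM hopt at1 h
    obtain ⟨x, aux', hux2⟩ : ∃ x, G.Adj u x ∧ coverCount G M s(u, x) = 2 := by
      rcases (by omega : coverCount G M s(u, s1) = 2 ∨ coverCount G M s(u, t1) = 2) with h | h
      · exact ⟨s1, as1, h⟩
      · exact ⟨t1, at1, h⟩
    -- w's neighbours
    obtain ⟨s2, t2, hp_s2, hp_t2, hst2, hnbw⟩ := nbhd_one hcub apw.symm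
    have as2 : G.Adj w s2 := by
      have : s2 ∈ G.neighborSet w := by rw [hnbw]; simp
      exact this
    have at2 : G.Adj w t2 := by
      have : t2 ∈ G.neighborSet w := by rw [hnbw]; simp
      exact this
    have sumw := cc_sum hM hp_s2 hp_t2 hst2 hnbw
    rw [show s(w, p) = s(p, w) from Sym2.eq_swap] at sumw
    obtain ⟨z, awz, hwz0, hz_mem⟩ : ∃ z, G.Adj w z ∧ coverCount G M s(w, z) = 0 ∧
        (z = s2 ∨ z = t2) := by
      rcases (by omega : coverCount G M s(w, s2) = 0 ∨ coverCount G M s(w, t2) = 0) with h | h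
      · exact ⟨s2, as2, h, Or.inl rfl⟩
      · exact ⟨t2, at2, h, Or.inr rfl⟩
    have hwz_unc : s(w, z) ∈ uncovered G M :=
      (mem_uncovered _).mpr ⟨(G.mem_edgeSet).mpr awz, hwz0⟩
    -- w,u not among p,q,r; w ≠ u known
    have hwp : w ≠ p := Ne.symm hpw_ne
    have hwq : w ≠ q := Ne.symm hq_w
    have hwr : w ≠ r := Ne.symm hr_w
    have hup : u ≠ p := Ne.symm hp_u
    have huq : u ≠ q := Ne.symm hq_u
    have hur : u ≠ r := Ne.symm hru_ne
    -- uncovered is exactly these three edges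
    have hne1 : s(p, q) ≠ s(r, u) := sym2_ne2 hpr hqr
    have hne2 : s(p, q) ≠ s(w, z) := sym2_ne2 (Ne.symm hwp) (Ne.symm hwq)
    have hne3 : s(r, u) ≠ s(w, z) := sym2_ne2 (Ne.symm hwr) (Ne.symm hwu)
    have huncov_eq : uncovered G M = {s(p, q), s(r, u), s(w, z)} := by
      refine (Set.eq_of_subset_of_ncard_le ?_ ?_ (Set.toFinite _)).symm
      · rintro t (rfl | rfl | rfl)
        · exact hpq_unc
        · exact hru_unc
        · exact hwz_unc
      · rw [hopt, Set.ncard_eq_three.mpr ⟨s(p, q), s(r, u), s(w, z), hne1, hne2, hne3, rfl⟩]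
    -- x is distinct from p,q,r,u,w
    have hxu : x ≠ u := aux'.ne'
    have hxp : x ≠ p := by
      intro hxe
      have hm : u ∈ G.neighborSet p := by rw [← hxe]; exact aux'.symm
      rw [hnbp] at hm
      rcases hm with h | h | h
      · exact huq h
      · exact hur h
      · exact (Ne.symm hwu) h
    have hxq : x ≠ q := by
      intro hxe
      have hm : u ∈ G.neighborSet q := by rw [← hxe]; exact aux'.symm
      rw [hnbq] at hm
      rcases hm with h | h | h
      · exact hup h
      · exact hur h
      · have he : s(u, x) = s(q, wq) := by rw [hxe, ← h]; exact Sym2.eq_swap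
        rw [he] at hux2
        omega
    have hxr : x ≠ r := by
      intro hxe
      have he : s(u, x) = s(r, u) := by rw [hxe]; exact Sym2.eq_swap
      rw [he] at hux2
      omega
    have hxw : x ≠ w := by
      intro hxe
      have hm : u ∈ G.neighborSet w := by rw [← hxe]; exact aux'.symm
      rw [hnbw] at hm
      rcases hm with h | h | h
      · exact hup h
      · have he : s(u, x) = s(w, s2) := by rw [hxe, h]; exact Sym2.eq_swap
        rw [he] at hux2
        omega
      · have he : s(u, x) = s(w, t2) := by rw [hxe, h]; exact Sym2.eq_swap
        rw [he] at hux2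
        omega
    -- x has an uncovered edge, which must be s(w,z) with z = x
    obtain ⟨s3, t3, hu_s3, hu_t3, hst3, hnbx⟩ := nbhd_one hcub aux'.symm
    have as3 : G.Adj x s3 := by
      have : s3 ∈ G.neighborSet x := by rw [hnbx]; simp
      exact this
    have at3 : G.Adj x t3 := by
      have : t3 ∈ G.neighborSet x := by rw [hnbx]; simp
      exact this
    have sumx := cc_sum hM hu_s3 hu_t3 hst3 hnbx
    rw [show s(x, u) = s(u, x) from Sym2.eq_swap] at sumx
    obtain ⟨z', axz', hxz'0⟩ : ∃ z', G.Adj x z' ∧ coverCount G M s(x, z') = 0 := by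
      rcases (by omega : coverCount G M s(x, s3) = 0 ∨ coverCount G M s(x, t3) = 0) with h | h
      · exact ⟨s3, as3, h⟩
      · exact ⟨t3, at3, h⟩
    have hxz'_unc : s(x, z') ∈ uncovered G M :=
      (mem_uncovered _).mpr ⟨(G.mem_edgeSet).mpr axz', hxz'0⟩
    rw [huncov_eq] at hxz'_unc
    have hzx : x = z ∧ G.Adj x w := by
      rcases hxz'_unc with h | h | h
      · rcases Sym2.eq_iff.mp h with ⟨h', -⟩ | ⟨h', -⟩
        · exact absurd h' hxp
        · exact absurd h' hxq
      · rcases Sym2.eq_iff.mp h with ⟨h', -⟩ | ⟨h', -⟩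
        · exact absurd h' hxr
        · exact absurd h' hxu
      · rw [Set.mem_singleton_iff] at h
        rcases Sym2.eq_iff.mp h with ⟨h', -⟩ | ⟨h1', h2'⟩
        · exact absurd h' hxw
        · subst h2'
          exact ⟨h1', axz'⟩
    have axw : G.Adj x w := hzx.2
    rw [← hzx.1] at huncov_eq
    -- choose i ≠ k with s(u,x) ∈ M i
    obtain ⟨i, hik, hux_i⟩ : ∃ i, i ≠ k ∧ s(u, x) ∈ (M i).edgeSet := by
      obtain ⟨i1, i2, h12, hs⟩ := Set.ncard_eq_two.mp hux2
      have hmem := Set.ext_iff.mp hs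
      by_cases h1k : i1 = k
      · subst h1k
        exact ⟨i2, fun h => h12 h.symm, (hmem i2).mpr (Or.inr rfl)⟩
      · exact ⟨i1, h1k, (hmem i1).mpr (Or.inl rfl)⟩
    have hADJux : (M i).Adj u x := SimpleGraph.Subgraph.mem_edgeSet.mp hux_i
    obtain ⟨N', hN', hPadj, hPsub, hkeep⟩ := swap_pm G (M i) (hM i)
      ({p, q, r, u, x, w} : Set V) ({s(p, q), s(r, u), s(x, w)} : Set (Sym2 V))
      (by rintro e (rfl | rfl | rfl)
          · exact (G.mem_edgeSet).mpr apq
          · exact (G.mem_edgeSet).mpr aru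
          · exact (G.mem_edgeSet).mpr axw)
      (by intro a' b' h
          rcases h with h | h | h <;>
            rcases Sym2.eq_iff.mp h with ⟨rfl, rfl⟩ | ⟨rfl, rfl⟩ <;> simp)
      (by intro v hv
          rcases hv with rfl | rfl | rfl | rfl | rfl | rfl
          · refine ⟨q, by simp, ?_⟩
            intro y hy
            simp only [Set.mem_insert_iff, Set.mem_singleton_iff, Sym2.eq_iff] at hy
            rcases hy with (⟨-, h⟩ | ⟨h, -⟩) | (⟨h, -⟩ | ⟨h, -⟩) | (⟨h, -⟩ | ⟨h, -⟩)
            · exact h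
            · exact absurd h hpq
            · exact absurd h hpr
            · exact absurd h (Ne.symm hup)
            · exact absurd h (Ne.symm hxp)
            · exact absurd h hpw_ne
          · refine ⟨p, by simp [Sym2.eq_swap], ?_⟩
            intro y hy
            simp only [Set.mem_insert_iff, Set.mem_singleton_iff, Sym2.eq_iff] at hy
            rcases hy with (⟨h, -⟩ | ⟨-, h⟩) | (⟨h, -⟩ | ⟨h, -⟩) | (⟨h, -⟩ | ⟨h, -⟩)
            · exact absurd h.symm hpq
            · exact h
            · exact absurd h hqr
            · exact absurd h (Ne.symm huq)
            · exact absurd h (Ne.symm hxq)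
            · exact absurd h hq_w
          · refine ⟨u, by simp, ?_⟩
            intro y hy
            simp only [Set.mem_insert_iff, Set.mem_singleton_iff, Sym2.eq_iff] at hy
            rcases hy with (⟨h, -⟩ | ⟨h, -⟩) | (⟨-, h⟩ | ⟨h, -⟩) | (⟨h, -⟩ | ⟨h, -⟩)
            · exact absurd h.symm hpr
            · exact absurd h.symm hqr
            · exact h
            · exact absurd h (Ne.symm hur)
            · exact absurd h (Ne.symm hxr)
            · exact absurd h hr_w
          · refine ⟨r, by simp [Sym2.eq_swap], ?_⟩
            intro y hy
            simp only [Set.mem_insert_iff, Set.mem_singleton_iff, Sym2.eq_iff] at hy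
            rcases hy with (⟨h, -⟩ | ⟨h, -⟩) | (⟨h, -⟩ | ⟨-, h⟩) | (⟨h, -⟩ | ⟨h, -⟩)
            · exact absurd h.symm (Ne.symm hup)
            · exact absurd h.symm (Ne.symm huq)
            · exact absurd h.symm (Ne.symm hur)
            · exact h
            · exact absurd h (Ne.symm hxu)
            · exact absurd h (Ne.symm hwu)
          · refine ⟨w, by simp, ?_⟩
            intro y hy
            simp only [Set.mem_insert_iff, Set.mem_singleton_iff, Sym2.eq_iff] at hy
            rcases hy with (⟨h, -⟩ | ⟨h, -⟩) | (⟨h, -⟩ | ⟨h, -⟩) | (⟨-, h⟩ | ⟨h, -⟩)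
            · exact absurd h.symm (Ne.symm hxp)
            · exact absurd h.symm (Ne.symm hxq)
            · exact absurd h.symm (Ne.symm hxr)
            · exact absurd h.symm (Ne.symm hxu)
            · exact h
            · exact absurd h hxw
          · refine ⟨x, by simp [Sym2.eq_swap], ?_⟩
            intro y hy
            simp only [Set.mem_insert_iff, Set.mem_singleton_iff, Sym2.eq_iff] at hy
            rcases hy with (⟨h, -⟩ | ⟨h, -⟩) | (⟨h, -⟩ | ⟨h, -⟩) | (⟨h, -⟩ | ⟨-, h⟩)
            · exact absurd h.symm hpw_ne
            · exact absurd h.symm hq_w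
            · exact absurd h.symm hr_w
            · exact absurd h.symm (Ne.symm hwu)
            · exact absurd h.symm hxw
            · exact h)
      (by intro v hv y hy
          rcases hv with rfl | rfl | rfl | rfl | rfl | rfl
          · have : y = w := matched_unique hM hy (hpw_all i hik)
            subst this; simp
          · have : y = r := matched_unique hM hy (hqr_all i hik)
            subst this; simp
          · have : y = q := matched_unique hM hy (hqr_all i hik).symm
            subst this; simp
          · have : y = x := matched_unique hM hy hADJux
            subst this; simp
          · have : y = u := matched_unique hM hy hADJux.symm
            subst this; simp
          · have : y = p := matched_unique hM hy (hpw_all i hik).symm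
            subst this; simp)
    set M' : Fin 3 → G.Subgraph := Function.update M i N' with hM'def
    have hM' : ∀ j, (M' j).IsPerfectMatching := by
      intro j
      by_cases hji : j = i
      · subst hji; simp only [hM'def, Function.update_self]; exact hN'
      · simp only [hM'def, Function.update_of_ne hji]; exact hM j
    have hdle : defect G ≤ (uncovered G M').ncard := Nat.sInf_le ⟨M', hM', rfl⟩
    have hempty : uncovered G M' = (∅ : Set (Sym2 V)) := by
      rw [Set.eq_empty_iff_forall_notMem]
      intro e he
      revert he
      induction e using Sym2.ind with
      | _ x' y' =>
        intro he
        obtain ⟨heG, hecov⟩ := he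
        have hei : s(x', y') ∉ N'.edgeSet := by
          have := hecov i; rwa [hM'def, Function.update_self] at this
        have hej : ∀ j, j ≠ i → s(x', y') ∉ (M j).edgeSet := by
          intro j hj
          have := hecov j; rwa [hM'def, Function.update_of_ne hj] at this
        have hnotMi : s(x', y') ∉ (M i).edgeSet := by
          intro hmem
          have hAdj : (M i).Adj x' y' := SimpleGraph.Subgraph.mem_edgeSet.mp hmem
          have hxT : x' ∈ ({p, q, r, u, x, w} : Set V) := by
            by_contra hxT
            exact hei (SimpleGraph.Subgraph.mem_edgeSet.mpr (hkeep x' y' hAdj hxT))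
          obtain ⟨j, hji, hjk⟩ := fin3_third i k
          obtain ⟨j', hj'i, hux_j'⟩ := cc_two_other hux2 hux_i
          rcases hxT with rfl | rfl | rfl | rfl | rfl | rfl
          · have : y' = w := matched_unique hM hAdj (hpw_all i hik)
            subst this
            exact hej j hji (SimpleGraph.Subgraph.mem_edgeSet.mpr (hpw_all j hjk))
          · have : y' = r := matched_unique hM hAdj (hqr_all i hik)
            subst this
            exact hej j hji (SimpleGraph.Subgraph.mem_edgeSet.mpr (hqr_all j hjk))
          · have : y' = q := matched_unique hM hAdj (hqr_all i hik).symm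
            subst this
            exact hej j hji (SimpleGraph.Subgraph.mem_edgeSet.mpr (hqr_all j hjk).symm)
          · have : y' = x := matched_unique hM hAdj hADJux
            subst this
            exact hej j' hj'i hux_j'
          · have hy'u : y' = u := matched_unique hM hAdj hADJux.symm
            refine hej j' hj'i ?_
            rw [hy'u, Sym2.eq_swap]
            exact hux_j'
          · have : y' = p := matched_unique hM hAdj (hpw_all i hik).symm
            subst this
            exact hej j hji (SimpleGraph.Subgraph.mem_edgeSet.mpr (hpw_all j hjk).symm)
        have hin : s(x', y') ∈ uncovered G M := by
          refine ⟨heG, fun j => ?_⟩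
          by_cases hji : j = i
          · subst hji; exact hnotMi
          · exact hej j hji
        rw [huncov_eq] at hin
        rcases hin with h | h | h
        · rw [h] at hei
          exact hei (SimpleGraph.Subgraph.mem_edgeSet.mpr (hPadj p q (by simp)))
        · rw [h] at hei
          exact hei (SimpleGraph.Subgraph.mem_edgeSet.mpr (hPadj r u (by simp)))
        · rw [Set.mem_singleton_iff] at h
          rw [h, show s(w, x) = s(x, w) from Sym2.eq_swap] at hei
          exact hei (SimpleGraph.Subgraph.mem_edgeSet.mpr (hPadj x w (by simp)))
    rw [hempty, Set.ncard_empty, hdf] at hdle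
    omega

end Hard

theorem stmt_15 (G : SimpleGraph V) (hG : IsSnark G) (hdf : defect G = 3)
    (M : Fin 3 → G.Subgraph) (hM : ∀ i, (M i).IsPerfectMatching)
    (hopt : (uncovered G M).ncard = 3)
    (a b c : V) (hab : a ≠ b) (hac : a ≠ c) (hbc : b ≠ c)
    (hT : G.Adj a b ∧ G.Adj b c ∧ G.Adj a c)
    (hint : (coreEdges G M ∩ {s(a, b), s(b, c), s(a, c)}).Nonempty) :
    ∃ e : Sym2 V, coreEdges G M ∩ {s(a, b), s(b, c), s(a, c)} = {e} ∧
      coverCount G M e = 0 := by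
  classical
  obtain ⟨hcub, -, -⟩ := hG
  have aab := hT.1
  have abc := hT.2.1
  have aac := hT.2.2
  obtain ⟨wa, hb_wa, hc_wa, hnba⟩ := nbhd_two hcub aab aac hbc
  obtain ⟨wb, ha_wb, hc_wb, hnbb⟩ := nbhd_two hcub aab.symm abc hac
  obtain ⟨wc, ha_wc, hb_wc, hnbc⟩ := nbhd_two hcub aac.symm abc.symm hab
  have Sa := cc_sum hM hbc hb_wa hc_wa hnba
  have Sb := cc_sum hM hac ha_wb hc_wb hnbb
  have Sc := cc_sum hM hab ha_wc hb_wc hnbc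
  rw [show s(b, a) = s(a, b) from Sym2.eq_swap] at Sb
  rw [show s(c, a) = s(a, c) from Sym2.eq_swap,
      show s(c, b) = s(b, c) from Sym2.eq_swap] at Sc
  have h3x : coverCount G M s(a, b) ≠ 3 := fun h => no_cc_three hcub hM hopt aab h
  have h3y : coverCount G M s(b, c) ≠ 3 := fun h => no_cc_three hcub hM hopt abc h
  have h3z : coverCount G M s(a, c) ≠ 3 := fun h => no_cc_three hcub hM hopt aac h
  have hint' : coverCount G M s(a, b) ≠ 1 ∨ coverCount G M s(b, c) ≠ 1 ∨
      coverCount G M s(a, c) ≠ 1 := by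
    obtain ⟨f, hf1, hf2⟩ := hint
    rcases hf2 with rfl | rfl | rfl
    · exact Or.inl hf1.2
    · exact Or.inr (Or.inl hf1.2)
    · exact Or.inr (Or.inr hf1.2)
  have hx : coverCount G M s(a, b) = 0 ∨ coverCount G M s(a, b) = 1 ∨
      coverCount G M s(a, b) = 2 := by omega
  have hy : coverCount G M s(b, c) = 0 ∨ coverCount G M s(b, c) = 1 ∨
      coverCount G M s(b, c) = 2 := by omega
  have hz : coverCount G M s(a, c) = 0 ∨ coverCount G M s(a, c) = 1 ∨
      coverCount G M s(a, c) = 2 := by omega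
  have swx : s(b, a) = s(a, b) := Sym2.eq_swap
  have swy : s(c, b) = s(b, c) := Sym2.eq_swap
  have swz : s(c, a) = s(a, c) := Sym2.eq_swap
  rcases hx with hx | hx | hx
  · rcases hy with hy | hy | hy
    · -- x=0, y=0 : share b
      exact (case00 hcub hM hopt hac aab.symm abc (by rw [swx]; exact hx) hy).elim
    · rcases hz with hz | hz | hz
      · exact (case00 hcub hM hopt hbc aab aac hx hz).elim
      · -- GOOD : e = s(a,b)
        refine ⟨s(a, b), ?_, hx⟩
        apply Set.eq_singleton_iff_unique_mem.mpr
        refine ⟨⟨⟨(G.mem_edgeSet).mpr aab, by omega⟩, Set.mem_insert _ _⟩, ?_⟩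
        rintro f ⟨⟨-, hfcc⟩, hfm⟩
        rcases hfm with rfl | rfl | rfl
        · rfl
        · exact absurd hy hfcc
        · exact absurd hz hfcc
      · exact (case021 hcub hM hopt hdf hab.symm hbc hac aab.symm abc aac
          (by rw [swx]; exact hx) hz hy).elim
    · rcases hz with hz | hz | hz
      · exact (case00 hcub hM hopt hbc aab aac hx hz).elim
      · exact (case021 hcub hM hopt hdf hab hac hbc aab aac abc hx hy hz).elim
      · exact ((by omega : False)).elim
  · rcases hy with hy | hy | hy
    · rcases hz with hz | hz | hz
      · exact (case00 hcub hM hopt hab.symm abc.symm aac.symm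
          (by rw [swy]; exact hy) (by rw [swz]; exact hz)).elim
      · -- GOOD : e = s(b,c)
        refine ⟨s(b, c), ?_, hy⟩
        apply Set.eq_singleton_iff_unique_mem.mpr
        refine ⟨⟨⟨(G.mem_edgeSet).mpr abc, by omega⟩, by simp⟩, ?_⟩
        rintro f ⟨⟨-, hfcc⟩, hfm⟩
        rcases hfm with rfl | rfl | rfl
        · exact absurd hx hfcc
        · rfl
        · exact absurd hz hfcc
      · exact (case021 hcub hM hopt hdf hbc hab.symm hac.symm abc aab.symm aac.symm
          hy (by rw [swz]; exact hz) (by rw [swx]; exact hx)).elim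
    · rcases hz with hz | hz | hz
      · -- GOOD : e = s(a,c)
        refine ⟨s(a, c), ?_, hz⟩
        apply Set.eq_singleton_iff_unique_mem.mpr
        refine ⟨⟨⟨(G.mem_edgeSet).mpr aac, by omega⟩, by simp⟩, ?_⟩
        rintro f ⟨⟨-, hfcc⟩, hfm⟩
        rcases hfm with rfl | rfl | rfl
        · exact absurd hx hfcc
        · exact absurd hy hfcc
        · rfl
      · rcases hint' with h | h | h
        · exact absurd hx h
        · exact absurd hy h
        · exact absurd hz h
      · exact (case211 hcub hM hac hab hbc.symm aac aab abc.symm hz hx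
          (by rw [swy]; exact hy)).elim
    · rcases hz with hz | hz | hz
      · exact (case021 hcub hM hopt hdf hac hab hbc.symm aac aab abc.symm hz
          (by rw [swy]; exact hy) hx).elim
      · exact (case211 hcub hM hbc hab.symm hac.symm abc aab.symm aac.symm hy
          (by rw [swx]; exact hx) (by rw [swz]; exact hz)).elim
      · exact ((by omega : False)).elim
  · rcases hy with hy | hy | hy
    · rcases hz with hz | hz | hz
      · exact (case00 hcub hM hopt hab.symm abc.symm aac.symm
          (by rw [swy]; exact hy) (by rw [swz]; exact hz)).elim
      · exact (case021 hcub hM hopt hdf hbc.symm hac.symm hab.symm abc.symm aac.symm aab.symm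
          (by rw [swy]; exact hy) (by rw [swx]; exact hx) (by rw [swz]; exact hz)).elim
      · exact ((by omega : False)).elim
    · rcases hz with hz | hz | hz
      · exact (case021 hcub hM hopt hdf hac.symm hbc.symm hab aac.symm abc.symm aab
          (by rw [swz]; exact hz) hx (by rw [swy]; exact hy)).elim
      · exact (case211 hcub hM hab hac hbc aab aac abc hx hz hy).elim
      · exact ((by omega : False)).elim
    · exact ((by omega : False)).elim
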